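/- arXiv:2310.14631 — 3 statements merged into one kernel-verified Lean document; each statement's English description precedes it below -/
import Mathlib

section
/- Let s, β, λ > 0 and X = s + E with E ~ Exp(β), Y ~ Exp(λ) independent of E. For 0 ≤ ω ≤ s, the expected duration during one renewal cycle for which the item is stored in cache equals E[(X - Y - ω)·1{Y + ω ≤ X}] = (β/(λ(λ+β)))·exp(-λ(s-ω)) + s - ω - 1/λ + 1/β. -/
open MeasureTheory ProbabilityTheory Filter Real Set



lemma expMeasure_withDensity (r : ℝ) :
    expMeasure r = MeasureTheory.volume.withDensity (exponentialPDF r) := rfl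

lemma measurable_exponentialPDF (r : ℝ) : Measurable (exponentialPDF r) :=
  (measurable_exponentialPDFReal r).ennreal_ofReal

lemma map_eq_expMeasure {Ω : Type*} [MeasurableSpace Ω] (μ : Measure Ω)
    [IsProbabilityMeasure μ] (r : ℝ) (hr : 0 < r) (f : Ω → ℝ) (hf : Measurable f)
    (h : ∀ t : ℝ, 0 ≤ t → (μ {o | t < f o}).toReal = Real.exp (-r * t)) :
    μ.map f = expMeasure r := by
  haveI := isProbabilityMeasure_expMeasure hr
  haveI : IsProbabilityMeasure (μ.map f) := Measure.isProbabilityMeasure_map hf.aemeasurable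
  have htail : ∀ t : ℝ, 0 ≤ t → μ {o | t < f o} = ENNReal.ofReal (Real.exp (-r * t)) := by
    intro t ht
    rw [← h t ht, ENNReal.ofReal_toReal (measure_ne_top μ _)]
  refine Measure.ext_of_Iic (μ.map f) (expMeasure r) (fun a => ?_)
  rw [Measure.map_apply hf measurableSet_Iic]
  have hrhs : expMeasure r (Iic a) = ENNReal.ofReal (if 0 ≤ a then 1 - exp (-(r * a)) else 0) := by
    rw [expMeasure_withDensity, withDensity_apply _ measurableSet_Iic,
      lintegral_exponentialPDF_eq_antiDeriv hr a]
  rw [hrhs]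
  have hpre : f ⁻¹' (Iic a) = {o | a < f o}ᶜ := by
    ext o; simp [not_lt]
  rw [hpre]
  by_cases ha : 0 ≤ a
  · rw [if_pos ha, prob_compl_eq_one_sub (show MeasurableSet {o | _ < f o} from hf measurableSet_Ioi), htail a ha,
      ← ENNReal.ofReal_one, ← ENNReal.ofReal_sub _ (exp_nonneg _), neg_mul]
  · rw [if_neg ha, ENNReal.ofReal_zero]
    have h0 : μ {o | (0:ℝ) < f o}ᶜ = 0 := by
      rw [prob_compl_eq_one_sub (show MeasurableSet {o | _ < f o} from hf measurableSet_Ioi), htail 0 le_rfl]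
      simp
    refine measure_mono_null (fun o ho => ?_) h0
    simp only [mem_compl_iff, mem_setOf_eq, not_lt] at ho ⊢
    linarith


lemma inner_lintegral {lam : ℝ} (hlam : 0 < lam) {c : ℝ} (hc : 0 ≤ c) :
    ∫⁻ y, ENNReal.ofReal (c - y) ∂(expMeasure lam)
      = ENNReal.ofReal (c - 1/lam + Real.exp (-(lam * c))/lam) := by
  rw [expMeasure_withDensity,
    lintegral_withDensity_eq_lintegral_mul _ (measurable_exponentialPDF lam)
      (show Measurable fun y : ℝ => ENNReal.ofReal (c - y) by fun_prop)]
  have hpt : ∀ y : ℝ, (exponentialPDF lam * fun y => ENNReal.ofReal (c - y)) y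
      = ENNReal.ofReal ((Icc (0:ℝ) c).indicator
          (fun y => lam * Real.exp (-(lam * y)) * (c - y)) y) := by
    intro y
    simp only [Pi.mul_apply]
    by_cases hy0 : 0 ≤ y
    · by_cases hyc : y ≤ c
      · rw [indicator_of_mem (Set.mem_Icc.mpr ⟨hy0, hyc⟩), exponentialPDF_of_nonneg hy0,
          ← ENNReal.ofReal_mul (by positivity)]
      · rw [indicator_of_notMem (fun hm => hyc (Set.mem_Icc.mp hm).2),
          ENNReal.ofReal_eq_zero.mpr (by linarith : c - y ≤ 0), mul_zero,
          ENNReal.ofReal_zero]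
    · rw [indicator_of_notMem (fun hm => hy0 (Set.mem_Icc.mp hm).1),
        exponentialPDF_of_neg (lt_of_not_ge hy0), ENNReal.ofReal_zero, zero_mul]
  rw [lintegral_congr hpt]
  have hcont : Continuous (fun y : ℝ => lam * Real.exp (-(lam * y)) * (c - y)) := by
    fun_prop
  have hint : Integrable ((Icc (0:ℝ) c).indicator
      (fun y => lam * Real.exp (-(lam * y)) * (c - y))) := by
    exact (hcont.integrableOn_Icc).integrable_indicator measurableSet_Icc
  rw [← ofReal_integral_eq_lintegral_ofReal hint]
  · congr 1
    rw [integral_indicator measurableSet_Icc, integral_Icc_eq_integral_Ioc,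
      ← intervalIntegral.integral_of_le hc]
    have hderiv : ∀ y ∈ uIcc (0:ℝ) c,
        HasDerivAt (fun y => Real.exp (-(lam * y)) * (y - c + 1/lam))
          (lam * Real.exp (-(lam * y)) * (c - y)) y := by
      intro y _
      have h1 : HasDerivAt (fun y : ℝ => -(lam * y)) (-lam) y := by
        exact ((hasDerivAt_id y).const_mul lam).neg.congr_deriv (by ring)
      have h2 : HasDerivAt (fun y : ℝ => y - c + 1/lam) 1 y :=
        ((hasDerivAt_id y).sub_const c).add_const _
      have := (h1.exp.mul h2)
      refine this.congr_deriv (Eq.symm ?_)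
      field_simp
      ring
    rw [intervalIntegral.integral_eq_sub_of_hasDerivAt hderiv
      (hcont.intervalIntegrable 0 c)]
    simp only [Real.exp_zero, mul_zero, neg_zero]
    ring
  · refine ae_of_all _ (indicator_nonneg (fun y hy => ?_))
    have h2 : (0:ℝ) ≤ c - y := by linarith [(Set.mem_Icc.mp hy).2]
    have h1 : (0:ℝ) ≤ lam * Real.exp (-(lam * y)) := by positivity
    exact mul_nonneg h1 h2


lemma outer_lintegral {β lam a : ℝ} (hβ : 0 < β) (hlam : 0 < lam) (ha : 0 ≤ a) :
    ∫⁻ x, exponentialPDF β x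
        * ENNReal.ofReal (a + x - 1/lam + Real.exp (-(lam * (a + x)))/lam) ∂(volume)
      = ENNReal.ofReal (β / (lam * (lam + β)) * Real.exp (-(lam * a)) + a - 1/lam + 1/β) := by
  set g' : ℝ → ℝ :=
    fun x => β * Real.exp (-(β * x)) * (a + x - 1/lam + Real.exp (-(lam * (a + x)))/lam) with hg'
  have hB : ∀ x : ℝ, 0 ≤ x → 0 ≤ a + x - 1/lam + Real.exp (-(lam * (a + x)))/lam := by
    intro x hx
    have h3 : 1 - lam * (a + x) ≤ Real.exp (-(lam * (a + x))) := by
      have := Real.add_one_le_exp (-(lam * (a + x))); linarith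
    have h4 : (1 - lam * (a + x))/lam ≤ Real.exp (-(lam * (a + x)))/lam :=
      (div_le_div_iff_of_pos_right hlam).mpr h3
    have h5 : (1 - lam * (a + x))/lam = 1/lam - (a + x) := by field_simp
    linarith
  have hpt : ∀ x : ℝ, exponentialPDF β x
      * ENNReal.ofReal (a + x - 1/lam + Real.exp (-(lam * (a + x)))/lam)
      = ENNReal.ofReal ((Ici (0:ℝ)).indicator g' x) := by
    intro x
    by_cases hx : 0 ≤ x
    · rw [indicator_of_mem (mem_Ici.mpr hx), exponentialPDF_of_nonneg hx, hg',
        ← ENNReal.ofReal_mul (by positivity)]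
    · rw [indicator_of_notMem (fun hm => hx (mem_Ici.mp hm)), exponentialPDF_of_neg (lt_of_not_ge hx),
        zero_mul, ENNReal.ofReal_zero]
  rw [lintegral_congr hpt]
  set F : ℝ → ℝ := fun x => -((a - 1/lam + 1/β) * Real.exp (-(β * x)) + x * Real.exp (-(β * x)))
      - β / (lam * (lam + β)) * Real.exp (-(lam * a)) * Real.exp (-((β + lam) * x)) with hF
  have hexp1 : ∀ x : ℝ, Real.exp (-(lam * (a + x)))
      = Real.exp (-(lam * a)) * Real.exp (-(lam * x)) := by
    intro x; rw [← Real.exp_add]; ring_nf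
  have hexp2 : ∀ x : ℝ, Real.exp (-((β + lam) * x))
      = Real.exp (-(β * x)) * Real.exp (-(lam * x)) := by
    intro x; rw [← Real.exp_add]; ring_nf
  have hderiv : ∀ x : ℝ, HasDerivAt F (g' x) x := by
    intro x
    have h1 : HasDerivAt (fun x : ℝ => Real.exp (-(β * x)))
        (Real.exp (-(β * x)) * (-β)) x := by
      simpa using (((hasDerivAt_id x).const_mul β).neg).exp
    have h3 : HasDerivAt (fun x : ℝ => Real.exp (-((β + lam) * x)))
        (Real.exp (-((β + lam) * x)) * (-(β + lam))) x := by
      simpa using (((hasDerivAt_id x).const_mul (β + lam)).neg).exp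
    have hx : HasDerivAt (fun x : ℝ => x) 1 x := hasDerivAt_id x
    have hmain := (((h1.const_mul (a - 1/lam + 1/β)).add (hx.mul h1)).neg).sub
      ((h3.const_mul (β / (lam * (lam + β)) * Real.exp (-(lam * a)))))
    refine hmain.congr_deriv (Eq.symm ?_)
    rw [hg']
    simp only
    rw [hexp1 x, hexp2 x]
    field_simp
    ring
  have hpos : ∀ x ∈ Ioi (0:ℝ), 0 ≤ g' x := by
    intro x hx
    exact mul_nonneg (by positivity) (hB x (le_of_lt hx))
  have hβx : Tendsto (fun x : ℝ => β * x) atTop atTop :=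
    (tendsto_id.const_mul_atTop hβ)
  have t1 : Tendsto (fun x : ℝ => Real.exp (-(β * x))) atTop (nhds 0) := by
    have := Real.tendsto_exp_neg_atTop_nhds_zero.comp hβx
    exact this
  have t2 : Tendsto (fun x : ℝ => x * Real.exp (-(β * x))) atTop (nhds 0) := by
    have h := (Real.tendsto_pow_mul_exp_neg_atTop_nhds_zero 1).comp hβx
    have h2 := h.const_mul (1/β)
    rw [mul_zero] at h2
    refine h2.congr (fun x => ?_)
    simp only [Function.comp_apply, pow_one]
    field_simp
  have t3 : Tendsto (fun x : ℝ => Real.exp (-((β + lam) * x))) atTop (nhds 0) := by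
    exact Real.tendsto_exp_neg_atTop_nhds_zero.comp
      (tendsto_id.const_mul_atTop (by linarith))
  have tF : Tendsto F atTop (nhds 0) := by
    have := (((t1.const_mul (a - 1/lam + 1/β)).add t2).neg).sub
      (t3.const_mul (β / (lam * (lam + β)) * Real.exp (-(lam * a))))
    simpa only [mul_zero, add_zero, neg_zero, sub_zero] using this
  have hcontF : ContinuousWithinAt F (Ici 0) 0 :=
    (hderiv 0).continuousAt.continuousWithinAt
  have hint : IntegrableOn g' (Ioi 0) :=
    integrableOn_Ioi_deriv_of_nonneg hcontF (fun x _ => hderiv x) hpos tF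
  have hval : ∫ x in Ioi (0:ℝ), g' x = 0 - F 0 :=
    integral_Ioi_of_hasDerivAt_of_tendsto hcontF (fun x _ => hderiv x) hint tF
  rw [← ofReal_integral_eq_lintegral_ofReal
      ((integrable_indicator_iff measurableSet_Ici).mpr
        ((integrableOn_Ici_iff_integrableOn_Ioi).mpr hint))
      (ae_of_all _ (indicator_nonneg (fun x hx => mul_nonneg (by positivity) (hB x hx))))]
  congr 1
  rw [integral_indicator measurableSet_Ici, integral_Ici_eq_integral_Ioi, hval, hF]
  simp only [Real.exp_zero, mul_zero, neg_zero, mul_one, zero_mul]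
  ring
/-- Overhearing-only policy, case `0 ≤ ω ≤ s`: expected cached duration per renewal cycle
`E[(X - Y - ω)·1{Y + ω ≤ X}] = (β/(λ(λ+β)))·exp(-λ(s-ω)) + s - ω - 1/λ + 1/β`,
where `X = s + E`, `E ~ Exp(β)`, `Y ~ Exp(λ)` independent of `E`. -/


theorem cached_duration_deaf_ttl_le_off
    {Ω : Type*} [MeasurableSpace Ω] (μ : Measure Ω) [IsProbabilityMeasure μ]
    (s β lam : ℝ) (hs : 0 < s) (hβ : 0 < β) (hlam : 0 < lam)
    (E Y : Ω → ℝ) (hEm : Measurable E) (hYm : Measurable Y)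
    (hE : ∀ t : ℝ, 0 ≤ t → (μ {o | t < E o}).toReal = Real.exp (-β * t))
    (hY : ∀ t : ℝ, 0 ≤ t → (μ {o | t < Y o}).toReal = Real.exp (-lam * t))
    (hEY : IndepFun E Y μ)
    (w : ℝ) (hw0 : 0 ≤ w) (hws : w ≤ s) :
    ∫ o in {o | Y o + w ≤ s + E o}, (s + E o - Y o - w) ∂μ
      = (β / (lam * (lam + β))) * Real.exp (-lam * (s - w)) + s - w - 1/lam + 1/β := by
  haveI hPβ := isProbabilityMeasure_expMeasure hβ
  haveI hPlam := isProbabilityMeasure_expMeasure hlam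
  have hS : MeasurableSet {o | Y o + w ≤ s + E o} :=
    measurableSet_le (hYm.add_const w) (measurable_const.add hEm)
  have hgm : Measurable (fun o => s + E o - Y o - w) :=
    ((measurable_const.add hEm).sub hYm).sub measurable_const
  -- Step 1: Bochner integral to lintegral
  rw [integral_eq_lintegral_of_nonneg_ae
      ((ae_restrict_iff' hS).mpr (ae_of_all _ (fun o ho => by
        simp only [Pi.zero_apply, mem_setOf_eq] at ho ⊢; linarith)))
      hgm.aestronglyMeasurable.restrict]
  -- Step 2: restricted lintegral = full lintegral
  have hstep2 : ∫⁻ o in {o | Y o + w ≤ s + E o}, ENNReal.ofReal (s + E o - Y o - w) ∂μ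
      = ∫⁻ o, ENNReal.ofReal (s + E o - Y o - w) ∂μ := by
    rw [← lintegral_indicator hS]
    refine lintegral_congr (fun o => ?_)
    by_cases ho : o ∈ {o | Y o + w ≤ s + E o}
    · rw [indicator_of_mem ho]
    · rw [indicator_of_notMem ho, eq_comm, ENNReal.ofReal_eq_zero]
      simp only [mem_setOf_eq, not_le] at ho
      linarith
  rw [hstep2]
  -- Step 3: transfer to the product of exponential laws
  have hmap : μ.map (fun o => (E o, Y o)) = (expMeasure β).prod (expMeasure lam) := by
    rw [(indepFun_iff_map_prod_eq_prod_map_map hEm.aemeasurable hYm.aemeasurable).mp hEY,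
      map_eq_expMeasure μ β hβ E hEm hE, map_eq_expMeasure μ lam hlam Y hYm hY]
  have hFm : Measurable (fun p : ℝ × ℝ => ENNReal.ofReal (s + p.1 - p.2 - w)) :=
    (((measurable_const.add measurable_fst).sub measurable_snd).sub
      measurable_const).ennreal_ofReal
  have hstep3 : ∫⁻ o, ENNReal.ofReal (s + E o - Y o - w) ∂μ
      = ∫⁻ p : ℝ × ℝ, ENNReal.ofReal (s + p.1 - p.2 - w)
          ∂((expMeasure β).prod (expMeasure lam)) := by
    rw [← hmap, lintegral_map hFm (hEm.prodMk hYm)]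
  rw [hstep3, lintegral_prod _ hFm.aemeasurable]
  -- Step 4: inner integral
  have hstep4 : ∫⁻ x, ∫⁻ y, ENNReal.ofReal (s + x - y - w) ∂(expMeasure lam) ∂(expMeasure β)
      = ENNReal.ofReal (β / (lam * (lam + β)) * Real.exp (-(lam * (s - w)))
          + (s - w) - 1/lam + 1/β) := by
    rw [expMeasure_withDensity β,
      lintegral_withDensity_eq_lintegral_mul _ (measurable_exponentialPDF β)
        hFm.lintegral_prod_right']
    have hptw : ∀ x : ℝ, (exponentialPDF β
          * fun x => ∫⁻ y, ENNReal.ofReal (s + x - y - w) ∂(expMeasure lam)) x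
        = exponentialPDF β x * ENNReal.ofReal ((s - w) + x - 1/lam
            + Real.exp (-(lam * ((s - w) + x)))/lam) := by
      intro x
      simp only [Pi.mul_apply]
      by_cases hx : 0 ≤ x
      · have hc : 0 ≤ s + x - w := by linarith
        have : ∫⁻ y, ENNReal.ofReal (s + x - y - w) ∂(expMeasure lam)
            = ENNReal.ofReal ((s + x - w) - 1/lam + Real.exp (-(lam * (s + x - w)))/lam) := by
          rw [← inner_lintegral hlam hc]
          refine lintegral_congr (fun y => ?_)
          congr 1
          ring
        rw [this]
        congr 2 <;> ring_nf
      · rw [exponentialPDF_of_neg (lt_of_not_ge hx), zero_mul, zero_mul]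
    rw [lintegral_congr hptw, outer_lintegral hβ hlam (by linarith : (0:ℝ) ≤ s - w)]
  rw [hstep4, ENNReal.toReal_ofReal]
  · rw [show -lam * (s - w) = -(lam * (s - w)) by ring]
    ring
  · set e := Real.exp (-(lam * (s - w))) with he_def
    have h3 : 1 - lam * (s - w) ≤ e := by
      have := Real.add_one_le_exp (-(lam * (s - w))); linarith
    have ha : (0:ℝ) ≤ s - w := by linarith
    have hD : (0:ℝ) < lam * β * (lam + β) := by positivity
    have hexpr : β / (lam * (lam + β)) * e + (s - w) - 1/lam + 1/β
        = (β^2*e + (lam*β*(lam+β))*(s - w) + lam^2 - β^2)/(lam*β*(lam+β)) := by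
      field_simp
      ring
    rw [hexpr]
    refine div_nonneg ?_ hD.le
    have h6 : β^2*(1 - lam*(s - w)) ≤ β^2*e := by nlinarith [sq_nonneg β]
    nlinarith [mul_nonneg (mul_nonneg (mul_nonneg hlam.le hlam.le) hβ.le) ha]
end

section
/- Let s, β > 0 and X = s + E with E ~ Exp(β). Suppose the item can be overheard and loaded into cache at any deterministic time t ≥ 0 chosen by the policy, after which it stays until the next request X. Then for any t, the hit probability h = P(X ≥ t) and the occupancy r = E[(X - t)⁺]/E[X] satisfy h ≤ (βs + 1)·r, with equality when t = s. -/
open MeasureTheory ProbabilityTheory Filter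

open Set Topology

lemma aux_exp_integral (b a : ℝ) (hb : 0 < b) :
    ∫ x in Set.Ioi a, Real.exp (-b * x) = Real.exp (-b * a) / b := by
  have hderiv : ∀ x ∈ Set.Ici a, HasDerivAt (fun x => -Real.exp (-b * x) / b)
      (Real.exp (-b * x)) x := by
    intro x _
    have h1 : HasDerivAt (fun x : ℝ => -b * x) (-b) x := by
      simpa using (hasDerivAt_id x).const_mul (-b)
    have h2 := (Real.hasDerivAt_exp (-b * x)).comp x h1
    have h3 := (h2.neg).div_const b
    convert h3 using 1
    · rfl
    · rfl
    · rfl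
    · field_simp
  have htend : Tendsto (fun x => -Real.exp (-b * x) / b) atTop (𝓝 0) := by
    have h1 : Tendsto (fun x : ℝ => b * x) atTop atTop :=
      Tendsto.const_mul_atTop hb tendsto_id
    have h2 : Tendsto (fun x : ℝ => Real.exp (-(b * x))) atTop (𝓝 0) :=
      Real.tendsto_exp_neg_atTop_nhds_zero.comp h1
    have : Tendsto (fun x : ℝ => -Real.exp (-(b * x)) / b) atTop (𝓝 (-0 / b)) :=
      (h2.neg).div_const b
    simpa [neg_mul] using this
  have := integral_Ioi_of_hasDerivAt_of_tendsto' hderiv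
    (exp_neg_integrableOn_Ioi a hb) htend
  rw [this]; ring

lemma aux_max_integral {Ω : Type*} [MeasurableSpace Ω] (μ : Measure Ω) [IsProbabilityMeasure μ]
    (β : ℝ) (hβ : 0 < β) (E : Ω → ℝ) (hEm : Measurable E)
    (hE : ∀ t : ℝ, 0 ≤ t → (μ {o | t < E o}).toReal = Real.exp (-β * t))
    (c : ℝ) (hc : 0 ≤ c) :
    Integrable (fun o => max (E o - c) 0) μ ∧
      ∫ o, max (E o - c) 0 ∂μ = Real.exp (-β * c) / β := by
  set f := fun o => max (E o - c) 0 with hf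
  have f_nn : 0 ≤ᵐ[μ] f := .of_forall fun o => le_max_right _ _
  have f_mble : Measurable f := (hEm.sub measurable_const).max measurable_const
  have layer := lintegral_eq_lintegral_meas_lt μ f_nn f_mble.aemeasurable
  have set_eq : ∀ u : ℝ, u ∈ Set.Ioi (0:ℝ) → μ {o | u < f o}
      = ENNReal.ofReal (Real.exp (-β * (u + c))) := by
    intro u hu
    have : {o | u < f o} = {o | u + c < E o} := by
      ext o
      simp only [hf, Set.mem_setOf_eq, lt_max_iff]
      constructor
      · rintro (h | h)
        · linarith
        · exact absurd h (not_lt.2 (le_of_lt hu))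
      · intro h; left; linarith
    rw [this, ← ENNReal.ofReal_toReal (measure_ne_top μ _),
      hE (u + c) (by have := hu.out; linarith)]
  have hint : IntegrableOn (fun u : ℝ => Real.exp (-β * (u + c))) (Set.Ioi 0) := by
    have : (fun u : ℝ => Real.exp (-β * (u + c)))
        = fun u : ℝ => Real.exp (-β * c) * Real.exp (-β * u) := by
      funext u; rw [← Real.exp_add]; ring_nf
    rw [this]
    exact (exp_neg_integrableOn_Ioi 0 hβ).const_mul _
  have hval : ∫ u in Set.Ioi (0:ℝ), Real.exp (-β * (u + c)) = Real.exp (-β * c) / β := by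
    have : (fun u : ℝ => Real.exp (-β * (u + c)))
        = fun u : ℝ => Real.exp (-β * c) * Real.exp (-β * u) := by
      funext u; rw [← Real.exp_add]; ring_nf
    rw [this, MeasureTheory.integral_const_mul, aux_exp_integral β 0 hβ]
    simp [div_eq_mul_inv]
  have rhs : ∫⁻ u in Set.Ioi (0:ℝ), μ {o | u < f o}
      = ENNReal.ofReal (Real.exp (-β * c) / β) := by
    rw [setLIntegral_congr_fun measurableSet_Ioi set_eq,
      ← ofReal_integral_eq_lintegral_ofReal hint
        (.of_forall fun u => (Real.exp_pos _).le), hval]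
  have fin : ∫⁻ o, ENNReal.ofReal (f o) ∂μ ≠ ⊤ := by
    rw [layer, rhs]; exact ENNReal.ofReal_ne_top
  have f_int : Integrable f μ :=
    ⟨f_mble.aestronglyMeasurable, (hasFiniteIntegral_iff_ofReal f_nn).2 fin.lt_top⟩
  refine ⟨f_int, ?_⟩
  rw [integral_eq_lintegral_of_nonneg_ae f_nn f_mble.aestronglyMeasurable, layer, rhs,
    ENNReal.toReal_ofReal (by positivity)]

lemma aux_tail_le {Ω : Type*} [MeasurableSpace Ω] (μ : Measure Ω) [IsProbabilityMeasure μ]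
    (β : ℝ) (hβ : 0 < β) (E : Ω → ℝ)
    (hE : ∀ t : ℝ, 0 ≤ t → (μ {o | t < E o}).toReal = Real.exp (-β * t))
    (u : ℝ) (hu : 0 < u) :
    (μ {o | u ≤ E o}).toReal = Real.exp (-β * u) := by
  apply le_antisymm
  · have tends : Tendsto (fun v => Real.exp (-β * v)) (𝓝[<] u) (𝓝 (Real.exp (-β * u))) :=
      ((Real.continuous_exp.comp (continuous_const.mul continuous_id)).tendsto u).mono_left
        nhdsWithin_le_nhds
    refine ge_of_tendsto tends ?_
    have hmem : Set.Ioo 0 u ∈ 𝓝[<] u := Ioo_mem_nhdsLT_of_mem ⟨hu, le_rfl⟩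
    filter_upwards [hmem] with v hv
    rw [← hE v hv.1.le]
    exact ENNReal.toReal_mono (measure_ne_top μ _)
      (measure_mono fun o h => lt_of_lt_of_le hv.2 h)
  · rw [← hE u hu.le]
    exact ENNReal.toReal_mono (measure_ne_top μ _) (measure_mono fun o (h : u < E o) => h.le)

/-- Idealized insertion-at-time-`t` policy: with `X = s + E`, `E ~ Exp(β)`,
the hit probability `h = P(X ≥ t)` and occupancy `r = E[(X-t)⁺]/E[X]`
satisfy `h ≤ (βs+1)·r` for every `t ≥ 0`, with equality when `t = s`. -/
theorem idealized_policy_efficiency_bound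
    {Ω : Type*} [MeasurableSpace Ω] (μ : Measure Ω) [IsProbabilityMeasure μ]
    (s β : ℝ) (hs : 0 < s) (hβ : 0 < β)
    (E : Ω → ℝ) (hEm : Measurable E)
    (hE : ∀ t : ℝ, 0 ≤ t → (μ {o | t < E o}).toReal = Real.exp (-β * t)) :
    (∀ t : ℝ, 0 ≤ t →
        (μ {o | t ≤ s + E o}).toReal
          ≤ (β * s + 1) * ((∫ o, max (s + E o - t) 0 ∂μ) / (s + 1/β))) ∧
    (μ {o | s ≤ s + E o}).toReal
      = (β * s + 1) * ((∫ o, max (s + E o - s) 0 ∂μ) / (s + 1/β)) := by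
  have hden : 0 < s + 1/β := by positivity
  -- E > 0 almost everywhere
  have hE0 : μ {o | 0 < E o} = 1 := by
    have h := hE 0 le_rfl
    simp only [mul_zero, neg_zero, Real.exp_zero] at h
    rwa [ENNReal.toReal_eq_one_iff] at h
  have hEpos : ∀ᵐ o ∂μ, 0 < E o := by
    have hms : MeasurableSet {o | 0 < E o} := hEm measurableSet_Ioi
    have hc : μ {o | 0 < E o}ᶜ = 0 := by
      rw [measure_compl hms (measure_ne_top μ _), hE0, measure_univ, tsub_self]
    rw [ae_iff]
    have hseq : {o | ¬ 0 < E o} = {o | 0 < E o}ᶜ := by ext o; simp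
    rw [hseq, hc]
  -- value of hit probability and integral in the case `t ≤ s`
  have case_le : ∀ t : ℝ, 0 ≤ t → t ≤ s →
      (μ {o | t ≤ s + E o}).toReal = 1 ∧
        ∫ o, max (s + E o - t) 0 ∂μ = s - t + 1/β := by
    intro t ht hts
    constructor
    · have h1 : (1 : ENNReal) ≤ μ {o | t ≤ s + E o} := by
        rw [← hE0]
        exact measure_mono fun o (h : 0 < E o) => by
          simp only [Set.mem_setOf_eq]; linarith
      have : μ {o | t ≤ s + E o} = 1 := le_antisymm prob_le_one h1
      simp [this]
    · have h0 := aux_max_integral μ β hβ E hEm hE 0 le_rfl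
      have hcongr : (fun o => max (s + E o - t) 0)
          =ᵐ[μ] fun o => (s - t) + max (E o - 0) 0 := by
        filter_upwards [hEpos] with o ho
        rw [max_eq_left (by linarith), max_eq_left (by linarith)]
        ring
      rw [integral_congr_ae hcongr, integral_add (integrable_const _) h0.1,
        integral_const, h0.2]
      simp
  refine ⟨fun t ht => ?_, ?_⟩
  · rcases le_or_gt t s with hts | hts
    · obtain ⟨hhit, hint⟩ := case_le t ht hts
      rw [hhit, hint]
      have key : (β * s + 1) * ((s - t + 1/β) / (s + 1/β)) = β * (s - t) + 1 := by
        field_simp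
      rw [key]
      nlinarith
    · -- t > s : equality case
      have hhit : (μ {o | t ≤ s + E o}).toReal = Real.exp (-β * (t - s)) := by
        have : {o | t ≤ s + E o} = {o | t - s ≤ E o} := by
          ext o; simp only [Set.mem_setOf_eq]; constructor <;> intro h <;> linarith
        rw [this]
        exact aux_tail_le μ β hβ E hE (t - s) (by linarith)
      have hint : ∫ o, max (s + E o - t) 0 ∂μ = Real.exp (-β * (t - s)) / β := by
        have : (fun o => max (s + E o - t) 0) = fun o => max (E o - (t - s)) 0 := by
          funext o; ring_nf
        rw [this]
        exact (aux_max_integral μ β hβ E hEm hE (t - s) (by linarith)).2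
      rw [hhit, hint]
      have : (β * s + 1) * ((Real.exp (-β * (t - s)) / β) / (s + 1/β))
          = Real.exp (-β * (t - s)) := by
        field_simp
      rw [this]
  · obtain ⟨hhit, hint⟩ := case_le s hs.le le_rfl
    rw [hhit, hint]
    have : s - s + 1/β = 1/β := by ring
    rw [this]
    field_simp
end

section
/- Let N ∈ ℕ, b > 1, and let f_i : [0,1] → [0,1] be the piecewise linear functions f_i(r) = a_i·r for 0 ≤ r ≤ c_i and f_i(r) = 1 + m_i·(r − 1) for c_i ≤ r ≤ 1, where a_i = 1/c_i · f_i(c_i) with f_i(c_i) = a_i c_i < 1 and m_i = (1 − a_i c_i)/(1 − c_i); each f_i is convex. Then any optimal solution r* of max ∑_i w_i f_i(r_i) subject to 0 ≤ r_i ≤ 1, ∑_i r_i ≤ b (with weights w_i > 0) can be chosen so that at most one index i has r_i* ∉ {0, c_i, 1}. -/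
open Finset

private lemma sum_upd (s : Finset ℕ) (g : ℕ → ℝ → ℝ) (v : ℕ → ℝ) (j : ℕ) (x : ℝ)
    (hj : j ∈ s) :
    ∑ k ∈ s, g k (Function.update v j x k) = g j x + ∑ k ∈ s.erase j, g k (v k) := by
  have h : ∀ k ∈ s, g k (Function.update v j x k)
      = Function.update (fun k => g k (v k)) j (g j x) k := by
    intro k _
    by_cases hk : k = j
    · subst hk; simp
    · simp [Function.update_of_ne hk]
  rw [Finset.sum_congr rfl h, Finset.sum_update_of_mem hj, Finset.sdiff_singleton_eq_erase]

private lemma seg (c a : ℕ → ℝ) (f : ℕ → ℝ → ℝ)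
    (hf : ∀ i, f i = fun r => if r ≤ c i then a i * r
        else 1 + ((1 - a i * c i) / (1 - c i)) * (r - 1))
    (k : ℕ) (hck : 0 < c k ∧ c k < 1) (x : ℝ) (hx0 : 0 ≤ x) (hx1 : x ≤ 1)
    (h0 : x ≠ 0) (hcx : x ≠ c k) (h1 : x ≠ 1) :
    ∃ lo hi s : ℝ, 0 ≤ lo ∧ lo < x ∧ x < hi ∧ hi ≤ 1 ∧
      (lo = 0 ∨ lo = c k) ∧ (hi = c k ∨ hi = 1) ∧
      ∀ y, lo ≤ y → y ≤ hi → f k y = f k x + s * (y - x) := by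
  rcases lt_or_gt_of_ne hcx with h | h
  · refine ⟨0, c k, a k, le_refl _, lt_of_le_of_ne hx0 (Ne.symm h0), h, le_of_lt hck.2,
      Or.inl rfl, Or.inl rfl, ?_⟩
    intro y hy0 hyc
    simp only [hf]
    rw [if_pos hyc, if_pos h.le]; ring
  · have hc1 : (1 : ℝ) - c k ≠ 0 := by linarith [hck.2]
    refine ⟨c k, 1, (1 - a k * c k) / (1 - c k), hck.1.le, h, lt_of_le_of_ne hx1 h1,
      le_refl _, Or.inr rfl, Or.inr rfl, ?_⟩
    intro y hyc hy1
    simp only [hf]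
    rw [if_neg (not_le.2 h)]
    rcases eq_or_lt_of_le hyc with he | hlt
    · subst he
      rw [if_pos le_rfl]
      field_simp
      ring
    · rw [if_neg (not_le.2 hlt)]; ring

private noncomputable def badSet (N : ℕ) (c r : ℕ → ℝ) : Finset ℕ :=
  (range N).filter fun k => r k ≠ 0 ∧ r k ≠ c k ∧ r k ≠ 1

private lemma mem_badSet {N : ℕ} {c r : ℕ → ℝ} {k : ℕ} :
    k ∈ badSet N c r ↔ k < N ∧ r k ≠ 0 ∧ r k ≠ c k ∧ r k ≠ 1 := by
  simp [badSet, Finset.mem_filter, Finset.mem_range]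

private lemma exchange (N : ℕ) (c a w : ℕ → ℝ)
    (hc : ∀ i < N, 0 < c i ∧ c i < 1)
    (f : ℕ → ℝ → ℝ)
    (hf : ∀ i, f i = fun r => if r ≤ c i then a i * r
        else 1 + ((1 - a i * c i) / (1 - c i)) * (r - 1))
    (r : ℕ → ℝ)
    (hr : ∀ i < N, r i ∈ Set.Icc (0 : ℝ) 1)
    (hopt : ∀ r' : ℕ → ℝ, (∀ i < N, r' i ∈ Set.Icc (0 : ℝ) 1) →
        ∑ i ∈ range N, r' i ≤ ∑ i ∈ range N, r i →
        ∑ i ∈ range N, w i * f i (r' i) ≤ ∑ i ∈ range N, w i * f i (r i))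
    (i j : ℕ) (hij : i ≠ j) (hi : i ∈ badSet N c r) (hj : j ∈ badSet N c r) :
    ∃ r'' : ℕ → ℝ, (∀ k < N, r'' k ∈ Set.Icc (0 : ℝ) 1) ∧
      (∑ k ∈ range N, r'' k = ∑ k ∈ range N, r k) ∧
      (∑ k ∈ range N, w k * f k (r'' k) = ∑ k ∈ range N, w k * f k (r k)) ∧
      badSet N c r'' ⊂ badSet N c r := by
  rw [mem_badSet] at hi hj
  obtain ⟨hiN, hi0, hic, hi1⟩ := hi
  obtain ⟨hjN, hj0, hjc, hj1⟩ := hj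
  obtain ⟨hri0, hri1⟩ := hr i hiN
  obtain ⟨hrj0, hrj1⟩ := hr j hjN
  obtain ⟨li, ui, si, hli0, hlii, hiui, hui1, hlic, huic, haffi⟩ :=
    seg c a f hf i (hc i hiN) (r i) hri0 hri1 hi0 hic hi1
  obtain ⟨lj, uj, sj, hlj0, hljj, hjuj, huj1, hljc, hujc, haffj⟩ :=
    seg c a f hf j (hc j hjN) (r j) hrj0 hrj1 hj0 hjc hj1
  set tp : ℝ := min (ui - r i) (r j - lj) with htp
  set tm : ℝ := min (r i - li) (uj - r j) with htm
  have htp0 : 0 < tp := lt_min (by linarith) (by linarith)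
  have htm0 : 0 < tm := lt_min (by linarith) (by linarith)
  have htp1 : tp ≤ ui - r i := min_le_left _ _
  have htp2 : tp ≤ r j - lj := min_le_right _ _
  have htm1 : tm ≤ r i - li := min_le_left _ _
  have htm2 : tm ≤ uj - r j := min_le_right _ _
  set R : ℝ → ℕ → ℝ := fun t => Function.update (Function.update r i (r i + t)) j (r j - t)
    with hR
  have hRi : ∀ t, R t i = r i + t := by
    intro t; simp [hR, Function.update_of_ne hij]
  have hRj : ∀ t, R t j = r j - t := by
    intro t; simp [hR]
  have hRk : ∀ t k, k ≠ i → k ≠ j → R t k = r k := by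
    intro t k hki hkj; simp [hR, Function.update_of_ne hkj, Function.update_of_ne hki]
  have hiR : i ∈ range N := Finset.mem_range.2 hiN
  have hjR : j ∈ range N := Finset.mem_range.2 hjN
  have hiej : i ∈ (range N).erase j := Finset.mem_erase.2 ⟨hij, hiR⟩
  -- feasibility
  have hfeas : ∀ t, -tm ≤ t → t ≤ tp → ∀ k < N, R t k ∈ Set.Icc (0 : ℝ) 1 := by
    intro t ht1 ht2 k hk
    by_cases hkj : k = j
    · subst hkj
      rw [hRj]
      constructor <;> linarith
    by_cases hki : k = i
    · subst hki
      rw [hRi]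
      constructor <;> linarith
    · rw [hRk t k hki hkj]; exact hr k hk
  -- sum preservation
  have hsum : ∀ t, ∑ k ∈ range N, R t k = ∑ k ∈ range N, r k := by
    intro t
    have e1 : ∑ k ∈ range N, R t k
        = (r j - t) + ∑ k ∈ (range N).erase j, (Function.update r i (r i + t)) k :=
      sum_upd (range N) (fun _ x => x) _ j _ hjR
    have e2 : ∑ k ∈ (range N).erase j, (Function.update r i (r i + t)) k
        = (r i + t) + ∑ k ∈ ((range N).erase j).erase i, r k :=
      sum_upd _ (fun _ x => x) r i _ hiej
    have e3 : r i + ∑ k ∈ ((range N).erase j).erase i, r k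
        = ∑ k ∈ (range N).erase j, r k := Finset.add_sum_erase _ r hiej
    have e4 : r j + ∑ k ∈ (range N).erase j, r k = ∑ k ∈ range N, r k :=
      Finset.add_sum_erase _ _ hjR
    rw [e1, e2]; linarith
  -- objective
  have hobj : ∀ t, -tm ≤ t → t ≤ tp →
      ∑ k ∈ range N, w k * f k (R t k)
        = ∑ k ∈ range N, w k * f k (r k) + t * (w i * si - w j * sj) := by
    intro t ht1 ht2
    have e1 : ∑ k ∈ range N, w k * f k (R t k)
        = w j * f j (r j - t)
          + ∑ k ∈ (range N).erase j, w k * f k ((Function.update r i (r i + t)) k) :=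
      sum_upd (range N) (fun k x => w k * f k x) _ j _ hjR
    have e2 : ∑ k ∈ (range N).erase j, w k * f k ((Function.update r i (r i + t)) k)
        = w i * f i (r i + t) + ∑ k ∈ ((range N).erase j).erase i, w k * f k (r k) :=
      sum_upd _ (fun k x => w k * f k x) r i _ hiej
    have e3 : w i * f i (r i) + ∑ k ∈ ((range N).erase j).erase i, w k * f k (r k)
        = ∑ k ∈ (range N).erase j, w k * f k (r k) := Finset.add_sum_erase _ (fun k => w k * f k (r k)) hiej
    have e4 : w j * f j (r j) + ∑ k ∈ (range N).erase j, w k * f k (r k)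
        = ∑ k ∈ range N, w k * f k (r k) := Finset.add_sum_erase _ (fun k => w k * f k (r k)) hjR
    have ai : f i (r i + t) = f i (r i) + si * (r i + t - r i) :=
      haffi _ (by linarith) (by linarith)
    have aj : f j (r j - t) = f j (r j) + sj * (r j - t - r j) :=
      haffj _ (by linarith) (by linarith)
    rw [e1, e2, ai, aj]
    ring_nf
    ring_nf at e3 e4 ⊢
    nlinarith [e3, e4]
  -- optimality in both directions gives zero slope difference
  have hΔ : w i * si - w j * sj = 0 := by
    have h1 := hopt (R tp) (hfeas tp (by linarith) le_rfl) (le_of_eq (hsum tp))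
    rw [hobj tp (by linarith) le_rfl] at h1
    have h2 := hopt (R (-tm)) (hfeas (-tm) le_rfl (by linarith)) (le_of_eq (hsum (-tm)))
    rw [hobj (-tm) le_rfl (by linarith)] at h2
    nlinarith
  refine ⟨R tp, hfeas tp (by linarith) le_rfl, hsum tp, ?_, ?_⟩
  · rw [hobj tp (by linarith) le_rfl, hΔ]; ring
  · have hsub : badSet N c (R tp) ⊆ badSet N c r := by
      intro k hk
      rw [mem_badSet] at hk ⊢
      by_cases hki : k = i
      · subst hki; exact ⟨hiN, hi0, hic, hi1⟩
      by_cases hkj : k = j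
      · subst hkj; exact ⟨hjN, hj0, hjc, hj1⟩
      · rw [hRk tp k hki hkj] at hk; exact hk
    rw [Finset.ssubset_iff_of_subset hsub]
    rcases le_total (ui - r i) (r j - lj) with hm | hm
    · have : tp = ui - r i := min_eq_left hm
      refine ⟨i, mem_badSet.2 ⟨hiN, hi0, hic, hi1⟩, ?_⟩
      rw [mem_badSet]
      intro hcon
      have : R tp i = ui := by rw [hRi, this]; ring
      rcases huic with h' | h'
      · exact hcon.2.2.1 (by rw [this, h'])
      · exact hcon.2.2.2 (by rw [this, h'])
    · have : tp = r j - lj := min_eq_right hm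
      refine ⟨j, mem_badSet.2 ⟨hjN, hj0, hjc, hj1⟩, ?_⟩
      rw [mem_badSet]
      intro hcon
      have : R tp j = lj := by rw [hRj, this]; ring
      rcases hljc with h' | h'
      · exact hcon.2.1 (by rw [this, h'])
      · exact hcon.2.2.1 (by rw [this, h'])

/-- Structural KKT consequence for the piecewise-linear convex objective:
an optimal occupancy vector can be chosen with at most one coordinate
outside `{0, c i, 1}`. -/
theorem optimal_solution_structure
    (N : ℕ) (b : ℝ) (hb : 1 < b)
    (c a w : ℕ → ℝ)
    (hc : ∀ i < N, 0 < c i ∧ c i < 1)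
    (ha : ∀ i < N, 0 < a i)
    (hac : ∀ i < N, a i * c i < 1)
    (hw : ∀ i < N, 0 < w i)
    (f : ℕ → ℝ → ℝ)
    (hf : ∀ i, f i = fun r => if r ≤ c i then a i * r
        else 1 + ((1 - a i * c i) / (1 - c i)) * (r - 1))
    (r : ℕ → ℝ)
    (hr : ∀ i < N, r i ∈ Set.Icc (0 : ℝ) 1)
    (hrb : ∑ i ∈ range N, r i ≤ b)
    (hopt : ∀ r' : ℕ → ℝ, (∀ i < N, r' i ∈ Set.Icc (0 : ℝ) 1) →
        ∑ i ∈ range N, r' i ≤ b →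
        ∑ i ∈ range N, w i * f i (r' i) ≤ ∑ i ∈ range N, w i * f i (r i)) :
    ∃ r' : ℕ → ℝ,
      (∀ i < N, r' i ∈ Set.Icc (0 : ℝ) 1) ∧
      (∑ i ∈ range N, r' i ≤ b) ∧
      (∑ i ∈ range N, w i * f i (r' i) = ∑ i ∈ range N, w i * f i (r i)) ∧
      {i | i < N ∧ r' i ≠ 0 ∧ r' i ≠ c i ∧ r' i ≠ 1}.Subsingleton := by
  suffices H : ∀ n : ℕ, ∀ r : ℕ → ℝ, (∀ i < N, r i ∈ Set.Icc (0 : ℝ) 1) →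
      (∑ i ∈ range N, r i ≤ b) →
      (∀ r' : ℕ → ℝ, (∀ i < N, r' i ∈ Set.Icc (0 : ℝ) 1) →
        ∑ i ∈ range N, r' i ≤ b →
        ∑ i ∈ range N, w i * f i (r' i) ≤ ∑ i ∈ range N, w i * f i (r i)) →
      (badSet N c r).card ≤ n →
      ∃ r' : ℕ → ℝ,
        (∀ i < N, r' i ∈ Set.Icc (0 : ℝ) 1) ∧
        (∑ i ∈ range N, r' i ≤ b) ∧
        (∑ i ∈ range N, w i * f i (r' i) = ∑ i ∈ range N, w i * f i (r i)) ∧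
        {i | i < N ∧ r' i ≠ 0 ∧ r' i ≠ c i ∧ r' i ≠ 1}.Subsingleton by
    exact H (badSet N c r).card r hr hrb hopt le_rfl
  intro n
  induction n with
  | zero =>
    intro r hr hrb hopt hcard
    refine ⟨r, hr, hrb, rfl, ?_⟩
    intro x hx y hy
    exfalso
    have hx' : x ∈ badSet N c r := mem_badSet.2 hx
    have hpos : 0 < (badSet N c r).card := Finset.card_pos.2 ⟨x, hx'⟩
    omega
  | succ n ih =>
    intro r hr hrb hopt hcard
    by_cases h1 : (badSet N c r).card ≤ 1
    · refine ⟨r, hr, hrb, rfl, ?_⟩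
      intro x hx y hy
      exact Finset.card_le_one.1 h1 x (mem_badSet.2 hx) y (mem_badSet.2 hy)
    · have h2 : 1 < (badSet N c r).card := by omega
      obtain ⟨i, hi, j, hj, hij⟩ := Finset.one_lt_card.1 h2
      have hopt' : ∀ r' : ℕ → ℝ, (∀ i < N, r' i ∈ Set.Icc (0 : ℝ) 1) →
          ∑ i ∈ range N, r' i ≤ ∑ i ∈ range N, r i →
          ∑ i ∈ range N, w i * f i (r' i) ≤ ∑ i ∈ range N, w i * f i (r i) := by
        intro r' h' hs'
        exact hopt r' h' (le_trans hs' hrb)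
      obtain ⟨r'', hfeas'', hsum'', hobj'', hss⟩ :=
        exchange N c a w hc f hf r hr hopt' i j hij hi hj
      have hrb'' : ∑ k ∈ range N, r'' k ≤ b := by rw [hsum'']; exact hrb
      have hopt'' : ∀ r' : ℕ → ℝ, (∀ i < N, r' i ∈ Set.Icc (0 : ℝ) 1) →
          ∑ i ∈ range N, r' i ≤ b →
          ∑ i ∈ range N, w i * f i (r' i) ≤ ∑ i ∈ range N, w i * f i (r'' i) := by
        intro r' h' hs'
        rw [hobj'']; exact hopt r' h' hs'
      have hcard'' : (badSet N c r'').card ≤ n :=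
        Nat.lt_succ_iff.1 (lt_of_lt_of_le (Finset.card_lt_card hss) hcard)
      obtain ⟨r', h1', h2', h3', h4'⟩ := ih r'' hfeas'' hrb'' hopt'' hcard''
      exact ⟨r', h1', h2', by rw [h3', hobj''], h4'⟩
end
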